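/- Let E be a finite-dimensional real inner product space, let f : E → ℝ be continuously differentiable, and let γ : ℝ → E be a complete gradient flow of f whose image is bounded. Then the Ω-limit set Ω(γ) := ⋂_{T ∈ ℝ} closure{γ(s) : s ≥ T} is nonempty, compact and connected, and every point p ∈ Ω(γ) is a critical point of f, i.e. ∇f(p) = 0. -/

import Mathlib

open Set Metric Bornology Filter Topology

/-- The intersection of a directed family of nonempty compact closed connected sets
in a T2 space is connected. -/
lemma aux_isConnected_iInter_directed {X : Type*} [TopologicalSpace X] [T2Space X]
    {ι : Type*} [Nonempty ι] (K : ι → Set X) (hd : Directed (· ⊇ ·) K)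
    (hne : ∀ i, (K i).Nonempty) (hc : ∀ i, IsCompact (K i)) (hcl : ∀ i, IsClosed (K i))
    (hconn : ∀ i, IsConnected (K i)) : IsConnected (⋂ i, K i) := by
  have hΩne : (⋂ i, K i).Nonempty :=
    IsCompact.nonempty_iInter_of_directed_nonempty_isCompact_isClosed K hd hne hc hcl
  have hΩcl : IsClosed (⋂ i, K i) := isClosed_iInter hcl
  have hΩc : IsCompact (⋂ i, K i) :=
    (hc (Classical.arbitrary ι)).of_isClosed_subset hΩcl (iInter_subset _ _)
  refine ⟨hΩne, ?_⟩
  rw [isPreconnected_iff_subset_of_fully_disjoint_closed hΩcl]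
  intro u v hu hv hΩuv huv
  obtain ⟨U, V, hUo, hVo, hAU, hBV, hUV⟩ :=
    SeparatedNhds.of_isCompact_isCompact (hΩc.inter_right hu) (hΩc.inter_right hv)
      (huv.mono inter_subset_right inter_subset_right)
  have hΩUV : (⋂ i, K i) ⊆ U ∪ V := fun x hx => by
    rcases hΩuv hx with h | h
    · exact Or.inl (hAU ⟨hx, h⟩)
    · exact Or.inr (hBV ⟨hx, h⟩)
  by_cases hex : ∃ i, K i ⊆ U ∪ V
  · obtain ⟨i, hi⟩ := hex
    have hΩsub : (⋂ j, K j) ⊆ K i := iInter_subset _ i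
    rcases isPreconnected_iff_subset_of_disjoint.1 (hconn i).isPreconnected U V hUo hVo hi
        (by rw [hUV.inter_eq, inter_empty]) with h | h
    · left
      intro x hx
      rcases hΩuv hx with h' | h'
      · exact h'
      · exact absurd rfl (hUV.ne_of_mem (h (hΩsub hx)) (hBV ⟨hx, h'⟩))
    · right
      intro x hx
      rcases hΩuv hx with h' | h'
      · exact absurd rfl (hUV.ne_of_mem (hAU ⟨hx, h'⟩) (h (hΩsub hx)))
      · exact h'
  · exfalso
    push_neg at hex
    have hall : ∀ i, (K i ∩ (U ∪ V)ᶜ).Nonempty := fun i => by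
      rcases not_subset.1 (hex i) with ⟨x, hx, hx'⟩
      exact ⟨x, hx, hx'⟩
    have hUVcl : IsClosed ((U ∪ V)ᶜ) := isClosed_compl_iff.2 (hUo.union hVo)
    have hd' : Directed (· ⊇ ·) (fun i => K i ∩ (U ∪ V)ᶜ) := fun i j => by
      obtain ⟨k, hk1, hk2⟩ := hd i j
      exact ⟨k, inter_subset_inter_left _ hk1, inter_subset_inter_left _ hk2⟩
    obtain ⟨x, hx⟩ :=
      IsCompact.nonempty_iInter_of_directed_nonempty_isCompact_isClosed _ hd' hall
        (fun i => (hc i).inter_right hUVcl) (fun i => (hcl i).inter hUVcl)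
    simp only [mem_iInter, mem_inter_iff] at hx
    exact (hx (Classical.arbitrary ι)).2 (hΩUV (mem_iInter.2 fun i => (hx i).1))

/-- Let `E` be a finite-dimensional real inner product space, `f : E → ℝ` be `C¹`,
and `γ : ℝ → E` a complete gradient flow of `f` (i.e. `γ' t = -∇f (γ t)` for all `t`)
with bounded image.  Then the Ω-limit set `⋂ T, closure {γ s | s ≥ T}` is nonempty,
compact and connected, and every one of its points is a critical point of `f`. -/
theorem stmt_7 {E : Type*} [NormedAddCommGroup E] [InnerProductSpace ℝ E]
    [FiniteDimensional ℝ E]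
    (f : E → ℝ) (hf : ContDiff ℝ 1 f)
    (γ : ℝ → E) (hγ : ∀ t : ℝ, HasDerivAt γ (-(gradient f (γ t))) t)
    (hbdd : Bornology.IsBounded (Set.range γ)) :
    (⋂ T : ℝ, closure (γ '' Set.Ici T)).Nonempty ∧
    IsCompact (⋂ T : ℝ, closure (γ '' Set.Ici T)) ∧
    IsConnected (⋂ T : ℝ, closure (γ '' Set.Ici T)) ∧
    ∀ p ∈ ⋂ T : ℝ, closure (γ '' Set.Ici T), gradient f p = 0 := by
  classical
  have hfd : Differentiable ℝ f := hf.differentiable one_ne_zero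
  have hγd : Differentiable ℝ γ := fun t => (hγ t).differentiableAt
  have hγc : Continuous γ := hγd.continuous
  set K : ℝ → Set E := fun T => closure (γ '' Set.Ici T) with hKdef
  have hKne : ∀ T, (K T).Nonempty := fun T => ⟨γ T, subset_closure ⟨T, le_refl T, rfl⟩⟩
  have hKcl : ∀ T, IsClosed (K T) := fun T => isClosed_closure
  have hKc : ∀ T, IsCompact (K T) := fun T =>
    (hbdd.subset (Set.image_subset_range _ _)).isCompact_closure
  have hKmono : ∀ {a b : ℝ}, a ≤ b → K b ⊆ K a := fun {a b} h =>
    closure_mono (Set.image_mono (Set.Ici_subset_Ici.2 h))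
  have hdir : Directed (· ⊇ ·) K := fun a b =>
    ⟨max a b, hKmono (le_max_left a b), hKmono (le_max_right a b)⟩
  have hKconn : ∀ T, IsConnected (K T) := fun T =>
    ((isConnected_Ici.image γ hγc.continuousOn)).closure
  have hne : (⋂ T, K T).Nonempty :=
    IsCompact.nonempty_iInter_of_directed_nonempty_isCompact_isClosed K hdir hKne hKc hKcl
  have hcompact : IsCompact (⋂ T, K T) :=
    (hKc 0).of_isClosed_subset (isClosed_iInter hKcl) (Set.iInter_subset _ 0)
  have hconn : IsConnected (⋂ T, K T) :=
    aux_isConnected_iInter_directed K hdir hKne hKc hKcl hKconn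
  refine ⟨hne, hcompact, hconn, ?_⟩
  -- the Lyapunov function g = f ∘ γ
  intro p hp
  have hg : ∀ t, HasDerivAt (fun s => f (γ s)) (-‖gradient f (γ t)‖ ^ 2) t := by
    intro t
    have h1 : HasFDerivAt f
        (InnerProductSpace.toDualMap ℝ E (gradient f (γ t)) : E →L[ℝ] ℝ) (γ t) :=
      hasGradientAt_iff_hasFDerivAt.1 (hfd (γ t)).hasGradientAt
    have h2 := h1.comp_hasDerivAt t (hγ t)
    refine h2.congr_deriv ?_
    rw [InnerProductSpace.toDualMap_apply_apply, inner_neg_right, real_inner_self_eq_norm_sq]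
  set g : ℝ → ℝ := fun t => f (γ t) with hgdef
  have hgdiff : Differentiable ℝ g := fun t => (hg t).differentiableAt
  have hganti : Antitone g := by
    refine antitone_of_deriv_nonpos hgdiff fun t => ?_
    rw [(hg t).deriv]
    exact neg_nonpos.2 (sq_nonneg _)
  have hKRc : IsCompact (closure (Set.range γ)) := hbdd.isCompact_closure
  obtain ⟨Cf, hCf⟩ := hKRc.exists_bound_of_continuousOn hf.continuous.continuousOn
  have hgbdd : BddBelow (Set.range g) := by
    refine ⟨-Cf, fun y hy => ?_⟩
    obtain ⟨t, rfl⟩ := hy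
    have := hCf (γ t) (subset_closure (Set.mem_range_self t))
    have := abs_le.1 (by simpa using this)
    linarith [this.1]
  set L : ℝ := ⨅ t, g t with hLdef
  have hgL : Tendsto g atTop (𝓝 L) := tendsto_atTop_ciInf hganti hgbdd
  have hgeL : ∀ t, L ≤ g t := fun t => ciInf_le hgbdd t
  -- continuity and boundedness of the gradient
  have hgradcont : Continuous (gradient f) := by
    have h1 : Continuous (fderiv ℝ f) := hf.continuous_fderiv one_ne_zero
    exact (InnerProductSpace.toDual ℝ E).symm.continuous.comp h1
  obtain ⟨M0, hM0⟩ := hKRc.exists_bound_of_continuousOn hgradcont.continuousOn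
  set M : ℝ := max M0 1 with hMdef
  have hM1 : (0 : ℝ) < M := lt_of_lt_of_le one_pos (le_max_right _ _)
  have hMb : ∀ t, ‖gradient f (γ t)‖ ≤ M := fun t =>
    (hM0 (γ t) (subset_closure (Set.mem_range_self t))).trans (le_max_left _ _)
  -- by contradiction
  by_contra h0
  set c : ℝ := ‖gradient f p‖ / 2 with hcdef
  have hc : 0 < c := half_pos (norm_pos_iff.2 h0)
  have hcont := hgradcont.continuousAt (x := p)
  rw [Metric.continuousAt_iff] at hcont
  obtain ⟨r, hr0, hball⟩ := hcont c hc
  have hlow : ∀ x, dist x p < r → c ≤ ‖gradient f x‖ := by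
    intro x hx
    have h1 := hball hx
    rw [dist_eq_norm] at h1
    have h2 : ‖gradient f p‖ - ‖gradient f x‖ ≤ ‖gradient f x - gradient f p‖ := by
      rw [norm_sub_rev]; exact norm_sub_norm_le _ _
    have h3 : ‖gradient f p‖ = 2 * c := by rw [hcdef]; ring
    linarith
  set τ : ℝ := r / (2 * M) with hτdef
  have hτ : 0 < τ := div_pos hr0 (by linarith)
  set δ : ℝ := c ^ 2 * τ with hδdef
  have hδ : 0 < δ := mul_pos (pow_pos hc 2) hτ
  -- choose t₀ with g t₀ < L + δ
  obtain ⟨t₀, ht₀⟩ : ∃ t₀, g t₀ < L + δ := by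
    refine exists_lt_of_ciInf_lt ?_
    rw [← hLdef]; linarith
  -- choose t₁ ≥ t₀ with γ t₁ close to p
  have hpK : p ∈ K t₀ := by
    have := Set.mem_iInter.1 hp t₀
    exact this
  obtain ⟨q, hqmem, hq⟩ := Metric.mem_closure_iff.1 hpK (r / 2) (by linarith)
  obtain ⟨t₁, ht₁ , rfl⟩ := hqmem
  have ht₁' : t₀ ≤ t₁ := ht₁
  have hdist₁ : dist (γ t₁) p < r / 2 := by rw [dist_comm]; exact hq
  -- γ stays in ball p r on [t₁, t₁ + τ]
  have hseg : ∀ x ∈ Set.Icc t₁ (t₁ + τ), ‖γ x - γ t₁‖ ≤ M * (x - t₁) := by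
    refine norm_image_sub_le_of_norm_deriv_le_segment'
      (f' := fun t => -(gradient f (γ t))) (fun x _ => (hγ x).hasDerivWithinAt)
      (fun x _ => ?_)
    rw [norm_neg]; exact hMb x
  have hstay : ∀ x ∈ Set.Icc t₁ (t₁ + τ), dist (γ x) p < r := by
    intro x hx
    have h1 := hseg x hx
    have h2 : M * (x - t₁) ≤ M * τ := by
      have := hx.2
      nlinarith [hx.1]
    have h3 : M * τ = r / 2 := by
      rw [hτdef]; field_simp
    calc dist (γ x) p ≤ dist (γ x) (γ t₁) + dist (γ t₁) p := dist_triangle _ _ _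
      _ < r / 2 + r / 2 := by
          apply add_lt_add_of_le_of_lt _ hdist₁
          rw [dist_eq_norm]; linarith
      _ = r := by ring
  -- f decreases at rate at least c² on [t₁, t₁ + τ]
  have hH : ∀ t, HasDerivAt (fun s => -g s - c ^ 2 * s)
      (‖gradient f (γ t)‖ ^ 2 - c ^ 2) t := by
    intro t
    have h1 := ((hg t).neg).sub ((hasDerivAt_id t).const_mul (c ^ 2))
    refine h1.congr_deriv ?_
    ring
  have hmono : MonotoneOn (fun s => -g s - c ^ 2 * s) (Set.Icc t₁ (t₁ + τ)) := by
    refine monotoneOn_of_deriv_nonneg (convex_Icc _ _)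
      (Continuous.continuousOn ((hgdiff.neg.sub
        ((differentiable_id.const_mul (c ^ 2)))).continuous)) ?_ ?_
    · intro x _
      exact (hH x).differentiableAt.differentiableWithinAt
    · intro x hx
      rw [interior_Icc] at hx
      rw [(hH x).deriv]
      have hxIcc : x ∈ Set.Icc t₁ (t₁ + τ) := Set.mem_Icc.2 ⟨hx.1.le, hx.2.le⟩
      have h1 := hlow (γ x) (hstay x hxIcc)
      nlinarith
  have hle : (fun s => -g s - c ^ 2 * s) t₁ ≤ (fun s => -g s - c ^ 2 * s) (t₁ + τ) :=
    hmono (Set.left_mem_Icc.2 (by linarith)) (Set.right_mem_Icc.2 (by linarith))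
      (by linarith)
  simp only at hle
  -- conclude
  have h1 : g (t₁ + τ) ≤ g t₁ - δ := by rw [hδdef]; nlinarith
  have h2 : g t₁ ≤ g t₀ := hganti ht₁'
  have h3 := hgeL (t₁ + τ)
  linarith
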